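/- Let H be a Polish group and n ≥ 1. Suppose there is a comeagre-many-roots transfer setup: H contains a dense subset C (the image in H of a comeagre conjugacy class of a densely embedded Polish group G) such that the n-th power map on C is continuous, open and surjective onto C in the topology of C, and images under the H-power map of nonmeagre-in-C open sets are nonmeagre in H. Then the set of elements of H possessing an n-th root is comeagre in H. -/

import Mathlib

/-- Transfer of generic `n`-th roots to a Polish group `H`: suppose `H` contains a dense
subset `C` (the image of a comeagre conjugacy class of a densely embedded Polish group) such
that the `n`-th power map on `C` maps `C` onto `C`, is continuous and open in the topology of
`C`, and images under the power map of nonmeagre open subsets of `C` are nonmeagre in `H`.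
Then the set of elements of `H` possessing an `n`-th root is comeagre in `H`. -/
theorem stmt14 {H : Type*} [Group H] [TopologicalSpace H] [IsTopologicalGroup H] [PolishSpace H]
    (n : ℕ) (hn : 1 ≤ n) (C : Set H) (hd : Dense C)
    (hmaps : Set.MapsTo (fun g : H => g ^ n) C C)
    (hsurj : Set.SurjOn (fun g : H => g ^ n) C C)
    (hcont : ContinuousOn (fun g : H => g ^ n) C)
    (hopen : IsOpenMap (Set.MapsTo.restrict (fun g : H => g ^ n) C C hmaps))
    (hnonmeagre : ∀ V : Set C, IsOpen V → ¬ IsMeagre V →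
      ¬ IsMeagre ((fun x : C => (x : H) ^ n) '' V)) :
    {h : H | ∃ r : H, r ^ n = h} ∈ residual H := by
  classical
  letI := TopologicalSpace.upgradeIsCompletelyMetrizable H
  -- For each open `B ⊆ H`, by openness of the restricted power map there is an open `U` with
  -- `C ∩ U = (·^n) '' (C ∩ B)`.
  have exU : ∀ B : Set H, ∃ U : Set H, IsOpen U ∧
      (IsOpen B → C ∩ U = (fun g : H => g ^ n) '' (C ∩ B)) := by
    intro B
    by_cases hB : IsOpen B
    · have hV : IsOpen ((Subtype.val : C → H) ⁻¹' B) := hB.preimage continuous_subtype_val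
      have h2 := hopen _ hV
      rw [isOpen_induced_iff] at h2
      obtain ⟨U, hU, hUeq⟩ := h2
      refine ⟨U, hU, fun _ => ?_⟩
      ext h
      constructor
      · rintro ⟨hC, hU'⟩
        have hmem0 : (⟨h, hC⟩ : C) ∈ Subtype.val ⁻¹' U := hU'
        rw [hUeq] at hmem0
        have hmem := hmem0
        obtain ⟨x, hxB, hxe⟩ := hmem
        exact ⟨(x : H), ⟨x.2, hxB⟩, congrArg Subtype.val hxe⟩
      · rintro ⟨x, ⟨hxC, hxB⟩, rfl⟩
        have hC : (fun g : H => g ^ n) x ∈ C := hmaps hxC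
        refine ⟨hC, ?_⟩
        have hmem : (⟨(fun g : H => g ^ n) x, hC⟩ : C) ∈ Subtype.val ⁻¹' U := by
          rw [hUeq]
          exact ⟨⟨x, hxC⟩, hxB, rfl⟩
        exact hmem
    · exact ⟨∅, isOpen_empty, fun h => absurd h hB⟩
  choose Ug hUgOpen hUgEq using exU
  -- countable dense set and the countable family of rational balls
  obtain ⟨s, hsc, hsd⟩ := TopologicalSpace.exists_countable_dense H
  set J : Set (H × ℚ) := {p | p.1 ∈ s ∧ 0 < p.2} with hJ
  have hJsub : J ⊆ s ×ˢ (Set.univ : Set ℚ) := by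
    rw [hJ]
    rintro p ⟨h1, h2⟩
    exact ⟨h1, trivial⟩
  have hJc : J.Countable := Set.Countable.mono hJsub (hsc.prod Set.countable_univ)
  set bl : H × ℚ → Set H := fun p => Metric.ball p.1 (p.2 : ℝ) with hbl
  have hKey : ∀ p : H × ℚ, C ∩ Ug (bl p) = (fun g : H => g ^ n) '' (C ∩ bl p) :=
    fun p => hUgEq _ Metric.isOpen_ball
  -- finding a small ball of the family around a point
  have hfind : ∀ (x : H) (ε : ℝ), 0 < ε → ∃ p ∈ J, x ∈ bl p ∧ ((p.2 : ℝ) ≤ ε ∧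
      closure (bl p) ⊆ Metric.ball x ε) := by
    intro x ε hε
    obtain ⟨q, hq0, hq4⟩ := exists_rat_btwn (by linarith : (0:ℝ) < ε/4)
    have hq0' : (0:ℚ) < q := by exact_mod_cast hq0
    obtain ⟨z, hzs, hzd⟩ := hsd.exists_dist_lt x (by exact_mod_cast hq0 : (0:ℝ) < (q:ℝ))
    refine ⟨(z, q), ?_, ?_, ?_, ?_⟩
    · rw [hJ]; exact ⟨hzs, hq0'⟩
    · simp only [hbl, Metric.mem_ball]
      exact hzd
    · show (q : ℝ) ≤ ε
      linarith
    · refine (Metric.closure_ball_subset_closedBall).trans ?_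
      intro w hw
      simp only [Metric.mem_closedBall] at hw
      have : dist w x ≤ dist w z + dist z x := dist_triangle _ _ _
      rw [dist_comm z x] at this
      simp only [Metric.mem_ball]
      have := this.trans (add_le_add hw hzd.le)
      linarith
  -- the dense open sets
  set E : Set H := ⋃ p ∈ {p ∈ J | (p.2 : ℝ) ≤ 1}, Ug (bl p) with hE
  set D : H × ℚ → ℕ → Set H := fun j k =>
    (⋃ p ∈ {p ∈ J | closure (bl p) ⊆ bl j ∧ (p.2 : ℝ) ≤ (1/2) ^ k}, Ug (bl p)) ∪
      (closure (Ug (bl j)))ᶜ with hD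
  have hEopen : IsOpen E := isOpen_biUnion fun p _ => hUgOpen _
  have hDopen : ∀ j k, IsOpen (D j k) := fun j k =>
    (isOpen_biUnion fun p _ => hUgOpen _).union (isClosed_closure.isOpen_compl)
  -- a membership helper : points of `C` in the image sets
  have hmemU : ∀ (p : H × ℚ) (x : H), x ∈ C → x ∈ bl p → x ^ n ∈ Ug (bl p) := by
    intro p x hxC hxB
    have : x ^ n ∈ C ∩ Ug (bl p) := by
      rw [hKey p]; exact ⟨x, ⟨hxC, hxB⟩, rfl⟩
    exact this.2
  have hEdense : Dense E := by
    rw [dense_iff_inter_open]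
    intro O hO hOne
    obtain ⟨c, hcO, hcC⟩ := hd.inter_open_nonempty O hO hOne
    obtain ⟨x, hxC, hxn⟩ := hsurj hcC
    obtain ⟨p, hpJ, hxp, hple, -⟩ := hfind x 1 one_pos
    refine ⟨c, hcO, ?_⟩
    rw [hE]
    exact Set.mem_biUnion ⟨hpJ, hple⟩ (hxn ▸ hmemU p x hxC hxp)
  have hDdense : ∀ j k, Dense (D j k) := by
    intro j k
    rw [dense_iff_inter_open]
    intro O hO hOne
    by_cases hO1 : (O ∩ Ug (bl j)).Nonempty
    · obtain ⟨c, hcO, hcC⟩ := hd.inter_open_nonempty _ (hO.inter (hUgOpen _)) hO1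
      have hc2 : c ∈ C ∩ Ug (bl j) := ⟨hcC, hcO.2⟩
      rw [hKey j] at hc2
      obtain ⟨x, ⟨hxC, hxB⟩, hxn⟩ := hc2
      have hδ : 0 < (j.2 : ℝ) - dist x j.1 := by
        rw [hbl] at hxB; simp only [Metric.mem_ball] at hxB; linarith
      have hε : 0 < min ((j.2 : ℝ) - dist x j.1) ((1/2) ^ k) :=
        lt_min hδ (by positivity)
      obtain ⟨p, hpJ, hxp, hple, hclo⟩ := hfind x _ hε
      refine ⟨c, hcO.1, Or.inl ?_⟩
      refine Set.mem_biUnion ⟨hpJ, ?_, hple.trans (min_le_right _ _)⟩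
        (hxn ▸ hmemU p x hxC hxp)
      refine hclo.trans ?_
      intro w hw
      simp only [Metric.mem_ball] at hw ⊢
      have h1 : dist w j.1 ≤ dist w x + dist x j.1 := dist_triangle _ _ _
      have h2 : dist w x < (j.2 : ℝ) - dist x j.1 := hw.trans_le (min_le_left _ _)
      rw [hbl]
      simp only [Metric.mem_ball]
      linarith
    · obtain ⟨o, ho⟩ := hOne
      refine ⟨o, ho, Or.inr ?_⟩
      intro hclo
      rcases Metric.mem_closure_iff.1 hclo with _
      have : (O ∩ Ug (bl j)).Nonempty := by
        have := mem_closure_iff.1 hclo O hO ho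
        exact this
      exact hO1 this
  -- the comeagre set
  set T : Set H := E ∩ ⋂ j ∈ J, ⋂ k : ℕ, D j k with hT
  have hTres : T ∈ residual H := by
    refine Filter.inter_mem (residual_of_dense_open hEopen hEdense) ?_
    refine (countable_bInter_mem hJc).mpr fun j hj => ?_
    exact countable_iInter_mem.mpr fun k => residual_of_dense_open (hDopen j k) (hDdense j k)
  refine Filter.mem_of_superset hTres ?_
  -- every point of `T` has an `n`-th root
  intro y hy
  obtain ⟨hyE, hyD⟩ := hy
  have hyD' : ∀ j ∈ J, ∀ k : ℕ, y ∈ D j k := by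
    intro j hj k
    have := Set.mem_iInter₂.1 hyD j hj
    exact Set.mem_iInter.1 this k
  -- invariant for the recursive construction
  set Q : ℕ → H × ℚ → Prop := fun k p => p ∈ J ∧ (p.2 : ℝ) ≤ (1/2) ^ k ∧ y ∈ Ug (bl p)
    with hQ
  have hQ0 : ∃ p, Q 0 p := by
    rw [hE] at hyE
    obtain ⟨p, hp, hyp⟩ := Set.mem_iUnion₂.1 hyE
    exact ⟨p, hp.1, by simpa using hp.2, hyp⟩
  have hstep : ∀ (k : ℕ) (p : H × ℚ), Q k p →
      ∃ p', Q (k+1) p' ∧ closure (bl p') ⊆ bl p := by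
    intro k p hp
    have hyd := hyD' p hp.1 (k+1)
    rcases hyd with h | h
    · obtain ⟨p', hp', hyp'⟩ := Set.mem_iUnion₂.1 h
      exact ⟨p', ⟨hp'.1, hp'.2.2, hyp'⟩, hp'.2.1⟩
    · exact absurd (subset_closure hp.2.2) h
  obtain ⟨p₀, hp₀⟩ := hQ0
  -- build the nested sequence of balls
  let F : ∀ k : ℕ, {p : H × ℚ // Q k p} → {p : H × ℚ // Q (k+1) p} := fun k q =>
    ⟨(hstep k q.1 q.2).choose, (hstep k q.1 q.2).choose_spec.1⟩
  let g : ∀ k : ℕ, {p : H × ℚ // Q k p} := fun k => Nat.rec ⟨p₀, hp₀⟩ F k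
  have hgnest : ∀ k, closure (bl (g (k+1)).1) ⊆ bl (g k).1 := fun k =>
    (hstep k (g k).1 (g k).2).choose_spec.2
  have hmono : ∀ k l, k ≤ l → bl (g l).1 ⊆ bl (g k).1 := by
    intro k l hkl
    induction l, hkl using Nat.le_induction with
    | base => exact subset_rfl
    | succ l hkl ih => exact (subset_closure.trans (hgnest l)).trans ih
  -- approximate roots
  have hx : ∀ k : ℕ, ∃ x : H, x ∈ bl (g k).1 ∧ dist (x ^ n) y < (1/2) ^ k := by
    intro k
    have hne : (Ug (bl (g k).1) ∩ Metric.ball y ((1/2) ^ k)).Nonempty :=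
      ⟨y, (g k).2.2.2, Metric.mem_ball_self (by positivity)⟩
    obtain ⟨c, hcO, hcC⟩ := hd.inter_open_nonempty _
      ((hUgOpen _).inter Metric.isOpen_ball) hne
    have hc2 : c ∈ C ∩ Ug (bl (g k).1) := ⟨hcC, hcO.1⟩
    rw [hKey _] at hc2
    obtain ⟨x, ⟨hxC, hxB⟩, hxn⟩ := hc2
    refine ⟨x, hxB, ?_⟩
    have : c ∈ Metric.ball y ((1/2) ^ k) := hcO.2
    simp only [Metric.mem_ball] at this
    simpa [hxn] using this
  choose x hxmem hxdist using hx
  -- the sequence of approximate roots is Cauchy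
  have hcauchy : CauchySeq x := by
    refine cauchySeq_of_le_tendsto_0 (fun N => 2 * (1/2) ^ N) ?_ ?_
    · intro m l N hNm hNl
      have hm : x m ∈ bl (g N).1 := hmono N m hNm (hxmem m)
      have hl : x l ∈ bl (g N).1 := hmono N l hNl (hxmem l)
      rw [hbl] at hm hl
      simp only [Metric.mem_ball] at hm hl
      have hr : ((g N).1.2 : ℝ) ≤ (1/2) ^ N := (g N).2.2.1
      have := dist_triangle (x m) ((g N).1.1) (x l)
      rw [dist_comm ((g N).1.1) (x l)] at this
      linarith
    · have h2 : Filter.Tendsto (fun N : ℕ => (1/2 : ℝ) ^ N) Filter.atTop (nhds 0) :=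
        tendsto_pow_atTop_nhds_zero_of_lt_one (by norm_num) (by norm_num)
      simpa using h2.const_mul (2:ℝ)
  obtain ⟨xlim, hxlim⟩ := cauchySeq_tendsto_of_complete hcauchy
  refine ⟨xlim, ?_⟩
  have h1 : Filter.Tendsto (fun k => (x k) ^ n) Filter.atTop (nhds (xlim ^ n)) :=
    ((continuous_pow n).tendsto xlim).comp hxlim
  have h2 : Filter.Tendsto (fun k => (x k) ^ n) Filter.atTop (nhds y) := by
    rw [tendsto_iff_dist_tendsto_zero]
    refine squeeze_zero (fun k => dist_nonneg) (fun k => (hxdist k).le) ?_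
    exact tendsto_pow_atTop_nhds_zero_of_lt_one (by norm_num) (by norm_num)
  exact tendsto_nhds_unique h1 h2
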